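/- Let F be an algebraically closed field of characteristic 0 and k = 2. Let J = J_{0,2} ⊕ J_{0,1} ∈ M₃(F) (one nilpotent Jordan block of size 2 and one of size 1). Then for every C ∈ M₃(F) there exist X₁, X₂ ∈ M₃(F) with C = X₁² + J·X₂². -/

import Mathlib

open Polynomial in
/-- Key lemma: rows 1 and 2 of a square of a 3×3 matrix can be prescribed arbitrarily. -/
lemma key_rows {F : Type*} [Field F] [IsAlgClosed F] (b₁ b₂ : Fin 3 → F) :
    ∃ X : Matrix (Fin 3) (Fin 3) F,
      (∀ j, (X ^ 2) 1 j = b₁ j) ∧ (∀ j, (X ^ 2) 2 j = b₂ j) := by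
  by_cases h1 : b₁ 0 ≠ 0
  · -- X = [r ; e₂ ; b₁]
    refine ⟨Matrix.of ![fun j => (b₂ j - b₁ 1 * (![0,0,1] : Fin 3 → F) j - b₁ 2 * b₁ j) / b₁ 0,
        ![0,0,1], b₁], fun j => ?_, fun j => ?_⟩ <;>
      fin_cases j <;>
      simp [pow_two, Matrix.mul_apply, Fin.sum_univ_three] <;>
      field_simp <;> ring
  push_neg at h1
  by_cases h2 : b₂ 0 ≠ 0
  · -- X = [r ; b₂ ; e₁]
    refine ⟨Matrix.of ![fun j => (b₁ j - b₂ 1 * b₂ j - b₂ 2 * (![0,1,0] : Fin 3 → F) j) / b₂ 0,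
        b₂, ![0,1,0]], fun j => ?_, fun j => ?_⟩ <;>
      fin_cases j <;>
      simp [pow_two, Matrix.mul_apply, Fin.sum_univ_three] <;>
      field_simp <;> ring
  push_neg at h2
  by_cases h3 : b₂ 1 ≠ 0
  · -- quartic case: find β with (b₁1 - β²)(b₂2 - β²) = b₁2 * b₂1
    obtain ⟨β, hβ⟩ := IsAlgClosed.exists_root
      (X ^ 4 - C (b₁ 1 + b₂ 2) * X ^ 2 + C (b₁ 1 * b₂ 2 - b₁ 2 * b₂ 1) : F[X]) (by
        have : (X ^ 4 - C (b₁ 1 + b₂ 2) * X ^ 2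
            + C (b₁ 1 * b₂ 2 - b₁ 2 * b₂ 1) : F[X]).degree = 4 := by
          compute_degree!
        rw [this]; decide)
    have hβ' : (b₁ 1 - β ^ 2) * (b₂ 2 - β ^ 2) = b₁ 2 * b₂ 1 := by
      have h := hβ
      simp only [Polynomial.IsRoot, Polynomial.eval_add, Polynomial.eval_sub,
        Polynomial.eval_mul, Polynomial.eval_pow, Polynomial.eval_C, Polynomial.eval_X] at h
      linear_combination h
    refine ⟨Matrix.of ![![0, b₂ 1, b₂ 2],
        ![(b₁ 1 - β ^ 2) / b₂ 1, β, -((b₁ 1 - β ^ 2) / b₂ 1) * β],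
        ![1, 0, 0]], fun j => ?_, fun j => ?_⟩ <;>
      fin_cases j <;>
      simp [pow_two, Matrix.mul_apply, Fin.sum_univ_three, h1, h2] <;>
      field_simp <;>
      (first | ring1 | linear_combination hβ')
  · push_neg at h3
    obtain ⟨γ, hγ⟩ := IsAlgClosed.exists_pow_nat_eq (b₂ 2) (n := 2) (by norm_num)
    refine ⟨Matrix.of ![b₁, ![1, 0, 0], ![0, 0, γ]], fun j => ?_, fun j => ?_⟩ <;>
      fin_cases j <;>
      simp [pow_two, Matrix.mul_apply, Fin.sum_univ_three, h1, h2, h3,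
        Matrix.vecHead, Matrix.vecTail] <;>
      linear_combination hγ

/-- For `J = J_{0,2} ⊕ J_{0,1} ∈ M₃(F)` and `k = 2`, every `C ∈ M₃(F)` can be
written as `X₁² + J X₂²`. -/
theorem stmt_19 {F : Type*} [Field F] [IsAlgClosed F] [CharZero F]
    (C : Matrix (Fin 3) (Fin 3) F) :
    ∃ X₁ X₂ : Matrix (Fin 3) (Fin 3) F,
      C = X₁ ^ 2 + Matrix.single 0 1 (1 : F) * X₂ ^ 2 := by
  obtain ⟨X, hX1, hX2⟩ := key_rows (fun j => C 1 j) (fun j => C 2 j)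
  refine ⟨X, Matrix.of ![fun j => C 0 j - (X ^ 2) 0 j, ![1, 0, 0], ![0, 0, 0]], ?_⟩
  ext i j
  fin_cases i
  · simp [Matrix.mul_apply, Matrix.add_apply, Matrix.single, pow_two,
      Fin.sum_univ_three]
  · have h : (X ^ 2) 1 j = C 1 j := hX1 j
    simp [Matrix.mul_apply, Matrix.add_apply, Matrix.single,
      Fin.sum_univ_three, h]
  · have h : (X ^ 2) 2 j = C 2 j := hX2 j
    simp [Matrix.mul_apply, Matrix.add_apply, Matrix.single,
      Fin.sum_univ_three, h]
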